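/- Let H be a finite-dimensional vector space over ℚ equipped with a symplectic form ω (a nondegenerate alternating bilinear form). Let G be a group acting linearly on H so that the action preserves ω (i.e., ω(g·x, g·y) = ω(x,y) for all g ∈ G and x,y ∈ H), and assume that H is a semisimple G-representation (H decomposes as a direct sum of irreducible subrepresentations). Then the subspace H^G of G-invariant vectors is a symplectic subspace of H, i.e., the restriction of ω to H^G is nondegenerate. -/

import Mathlib

/-- **Symplectic criterion.**  Let `H` be a finite-dimensional `ℚ`-vector space with a
symplectic form `ω` (nondegenerate alternating bilinear form).  Let a group `G` act on `H`
via a representation `ρ` preserving `ω`, and assume `H` is a semisimple `G`-representation,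
i.e. `H` is the internal direct sum of a family of irreducible subrepresentations.  Then the
restriction of `ω` to the invariants `H^G` is nondegenerate. -/
theorem invariants_symplectic
    {H : Type*} [AddCommGroup H] [Module ℚ H] [FiniteDimensional ℚ H]
    (ω : H →ₗ[ℚ] H →ₗ[ℚ] ℚ)
    (halt : ∀ x : H, ω x x = 0)
    (hnd : ∀ x : H, (∀ y : H, ω x y = 0) → x = 0)
    {G : Type*} [Group G] (ρ : Representation ℚ G H)
    (hpres : ∀ (g : G) (x y : H), ω (ρ g x) (ρ g y) = ω x y)
    {ι : Type*} [DecidableEq ι] (W : ι → Submodule ℚ H)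
    (hstable : ∀ (i : ι) (g : G) (x : H), x ∈ W i → ρ g x ∈ W i)
    (hne : ∀ i : ι, W i ≠ ⊥)
    (hirr : ∀ (i : ι) (U : Submodule ℚ H), U ≤ W i →
      (∀ (g : G) (x : H), x ∈ U → ρ g x ∈ U) → U = ⊥ ∨ U = W i)
    (hsum : DirectSum.IsInternal W) :
    ∀ x : H, (∀ g : G, ρ g x = x) →
      (∀ y : H, (∀ g : G, ρ g y = y) → ω x y = 0) → x = 0 := by
  intro x hx hx0
  apply hnd
  have key : ∀ i : ι, ∀ y ∈ W i, ω x y = 0 := by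
    intro i
    set U : Submodule ℚ H := W i ⊓ LinearMap.ker (ω x) with hU
    have hUle : U ≤ W i := inf_le_left
    have hUstab : ∀ (g : G) (z : H), z ∈ U → ρ g z ∈ U := by
      intro g z hz
      refine ⟨hstable i g z hz.1, ?_⟩
      have : ω x (ρ g z) = ω x z := by
        conv_lhs => rw [← hx g]
        exact hpres g x z
      simpa [LinearMap.mem_ker, this] using hz.2
    rcases hirr i U hUle hUstab with hbot | htop
    · intro y hy
      have hyinv : ∀ g : G, ρ g y = y := by
        intro g
        have hmem : ρ g y - y ∈ U := by
          refine ⟨sub_mem (hstable i g y hy) hy, ?_⟩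
          have : ω x (ρ g y) = ω x y := by
            conv_lhs => rw [← hx g]
            exact hpres g x y
          simp [LinearMap.mem_ker, this]
        rw [hbot] at hmem
        have := Submodule.mem_bot (R := ℚ) |>.mp hmem
        exact sub_eq_zero.mp this
      exact hx0 y hyinv
    · intro y hy
      have : y ∈ U := htop ▸ hy
      exact this.2
  intro y
  have hy : y ∈ (⨆ i, W i) := by
    rw [hsum.submodule_iSup_eq_top]; exact Submodule.mem_top
  refine Submodule.iSup_induction W (motive := fun z => ω x z = 0) hy ?_ ?_ ?_
  · exact key
  · simp
  · intro a b ha hb; simp [ha, hb]
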